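/- Let f: D → ℂ be holomorphic on a punctured disc around z₀ with a pole at z₀, and suppose for each z in the punctured disc, f(z) is given by a function F(z, a) of an auxiliary parameter a ∈ [1,∞) admitting an asymptotic expansion F(z,a) ∼ Σ_{j} a^{−μ_j(z)} (possibly with meromorphic coefficients) locally uniformly in z as a → ∞, with exponents μ_j holomorphic. Then the residue res_{z=z₀} F(z, a) = (1/2πi)∮ F(z,a) dz admits as a → ∞ an asymptotic expansion in terms a^{−μ_j(z₀)} log(a)^m with m bounded by the pole order. -/

import Mathlib

open Finset

open Metric Complex


/-- Circle integral of a finite sum. -/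
lemma circleIntegral_finset_sum' {ι : Type*} (s : Finset ι) (f : ι → ℂ → ℂ) (c : ℂ) (R : ℝ)
    (hf : ∀ i ∈ s, CircleIntegrable (f i) c R) :
    (∮ z in C(c, R), ∑ i ∈ s, f i z) = ∑ i ∈ s, ∮ z in C(c, R), f i z := by
  simp only [circleIntegral, Finset.smul_sum,
    intervalIntegral.integral_finset_sum (fun i hi => (hf i hi).out)]

/-- Iterated derivatives of `exp (w * μ z) * h z` have the form
`exp (w * μ z) * (polynomial in w with analytic coefficients)`. -/
lemma expPolyDeriv (n : ℕ) (μ h : ℂ → ℂ) (s : Set ℂ) (hs : IsOpen s)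
    (hμ : ∀ z ∈ s, AnalyticAt ℂ μ z) (hh : ∀ z ∈ s, AnalyticAt ℂ h z) :
    ∃ q : ℕ → ℂ → ℂ, (∀ m, ∀ z ∈ s, AnalyticAt ℂ (q m) z) ∧
      (∀ m, n < m → q m = fun _ => 0) ∧
      ∀ (w : ℂ) (z : ℂ), z ∈ s →
        iteratedDeriv n (fun u => Complex.exp (w * μ u) * h u) z
          = Complex.exp (w * μ z) * ∑ m ∈ Finset.range (n+1), w ^ m * q m z := by
  induction n with
  | zero =>
    refine ⟨fun m => if m = 0 then h else fun _ => 0, ?_, ?_, ?_⟩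
    · intro m z hz
      dsimp only
      split
      · exact hh z hz
      · exact analyticAt_const
    · intro m hm
      simp [hm.ne']
    · intro w z hz
      simp [iteratedDeriv_zero]
  | succ n ih =>
    obtain ⟨q, hq, hq0, hiter⟩ := ih
    refine ⟨fun m z => deriv (q m) z +
        deriv μ z * (match m with | 0 => 0 | m+1 => q m z), ?_, ?_, ?_⟩
    · intro m z hz
      apply AnalyticAt.add
      · exact AnalyticOnNhd.deriv (hq m) z hz
      · apply AnalyticAt.mul
        · exact AnalyticOnNhd.deriv hμ z hz
        · match m with
          | 0 => exact analyticAt_const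
          | m+1 => exact hq m z hz
    · intro m hm
      match m, hm with
      | m+1, hm =>
        have h1 : q (m+1) = fun _ => 0 := hq0 (m+1) (by omega)
        have h2 : q m = fun _ => 0 := hq0 m (by omega)
        funext z
        simp [h1, h2]
    · intro w z hz
      have hev : iteratedDeriv n (fun u => Complex.exp (w * μ u) * h u)
          =ᶠ[nhds z] fun u => Complex.exp (w * μ u) * ∑ m ∈ Finset.range (n+1), w ^ m * q m u := by
        filter_upwards [hs.mem_nhds hz] with u hu using hiter w u hu
      rw [iteratedDeriv_succ, hev.deriv_eq]
      have hμz : HasDerivAt μ (deriv μ z) z := (hμ z hz).differentiableAt.hasDerivAt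
      have h1 : HasDerivAt (fun u => Complex.exp (w * μ u))
          (Complex.exp (w * μ z) * (w * deriv μ z)) z := (hμz.const_mul w).cexp
      have h2 : HasDerivAt (fun u => ∑ m ∈ Finset.range (n+1), w ^ m * q m u)
          (∑ m ∈ Finset.range (n+1), w ^ m * deriv (q m) z) z := by
        apply HasDerivAt.fun_sum
        intro m hm
        exact ((hq m z hz).differentiableAt.hasDerivAt).const_mul (w ^ m)
      rw [(h1.fun_mul h2).deriv]
      have key : ∑ m ∈ Finset.range (n+2), w ^ m *
            (deriv (q m) z + deriv μ z * (match m with | 0 => 0 | m+1 => q m z))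
          = (w * deriv μ z) * (∑ m ∈ Finset.range (n+1), w ^ m * q m z)
            + ∑ m ∈ Finset.range (n+1), w ^ m * deriv (q m) z := by
        simp only [mul_add, Finset.sum_add_distrib]
        have e1 : ∑ m ∈ Finset.range (n+2), w ^ m * deriv (q m) z
            = ∑ m ∈ Finset.range (n+1), w ^ m * deriv (q m) z := by
          rw [Finset.sum_range_succ, hq0 (n+1) (Nat.lt_succ_self n)]
          simp
        have e2 : ∑ m ∈ Finset.range (n+2),
              w ^ m * (deriv μ z * (match m with | 0 => 0 | m+1 => q m z))
            = (w * deriv μ z) * ∑ m ∈ Finset.range (n+1), w ^ m * q m z := by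
          rw [Finset.sum_range_succ', Finset.mul_sum]
          simp only [pow_zero, mul_zero, one_mul, add_zero]
          apply Finset.sum_congr rfl
          intro m _
          ring
        rw [e1, e2]
        ring
      rw [key]
      ring

/-- The residue of `a ^ (-μ z) * g z` at `z₀` is `a ^ (-μ z₀)` times a polynomial in `log a`. -/
lemma key_residue (μ g : ℂ → ℂ) (z₀ : ℂ) (rr : ℝ) (hrr : 0 < rr)
    (hμ : ∀ z ∈ Metric.closedBall z₀ rr, AnalyticAt ℂ μ z)
    (hg : MeromorphicAt g z₀)
    (hg' : ∀ z ∈ Metric.closedBall z₀ rr, z ≠ z₀ → AnalyticAt ℂ g z) :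
    ∃ (N : ℕ) (c : ℕ → ℂ), ∀ a : ℝ, 1 < a →
      (2 * (Real.pi : ℂ) * Complex.I)⁻¹ *
          (∮ z in C(z₀, rr), (a:ℂ) ^ (-(μ z)) * g z)
        = (a:ℂ) ^ (-(μ z₀)) * ∑ m ∈ Finset.range (N+1), c m * ((Real.log a : ℂ)) ^ m := by
  obtain ⟨n, hn⟩ := hg
  set h : ℂ → ℂ := fun z => (z - z₀) ^ (n+1) * g z with hh_def
  have hc₀ : z₀ ∈ Metric.closedBall z₀ rr := Metric.mem_closedBall_self hrr.le
  have hh : ∀ z ∈ Metric.closedBall z₀ rr, AnalyticAt ℂ h z := by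
    intro z hz
    by_cases hzz : z = z₀
    · subst hzz
      have : h = fun w => (w - z) * ((w - z) ^ n • g w) := by
        funext w; simp only [hh_def, smul_eq_mul, pow_succ]; ring
      rw [this]
      exact ((analyticAt_id.sub analyticAt_const).mul hn)
    · exact ((analyticAt_id.sub analyticAt_const).pow _).mul (hg' z hz hzz)
  -- get an open set around z₀ where μ and h are analytic
  obtain ⟨s, hsP, hs_open, hz₀s⟩ :=
    _root_.eventually_nhds_iff.mp ((hμ z₀ hc₀).eventually_analyticAt.and (hh z₀ hc₀).eventually_analyticAt)
  obtain ⟨q, hq, hq0, hiter⟩ := expPolyDeriv n μ h s hs_open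
    (fun z hz => (hsP z hz).1) (fun z hz => (hsP z hz).2)
  refine ⟨n, fun m => (-1) ^ m * ((n.factorial : ℂ))⁻¹ * q m z₀, ?_⟩
  intro a ha
  have ha0 : (0:ℝ) < a := lt_trans one_pos ha
  have haC : (a : ℂ) ≠ 0 := by exact_mod_cast ha0.ne'
  set L : ℂ := ((Real.log a : ℝ) : ℂ) with hL_def
  have hcpow : ∀ w : ℂ, (a:ℂ) ^ (-w) = Complex.exp (-L * w) := by
    intro w
    rw [Complex.cpow_def_of_ne_zero haC, ← Complex.ofReal_log ha0.le]
    ring_nf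
    rw [hL_def]
    ring_nf
  set f : ℂ → ℂ := fun z => Complex.exp (-L * μ z) * h z with hf_def
  have hdiff : DifferentiableOn ℂ f (Metric.closedBall z₀ rr) := by
    intro z hz
    exact (((hμ z hz).differentiableAt.const_mul (-L)).cexp.mul
      (hh z hz).differentiableAt).differentiableWithinAt
  lift rr to NNReal using hrr.le with R hR
  have hps : HasFPowerSeriesOnBall f (cauchyPowerSeries f z₀ R) z₀ R :=
    hdiff.hasFPowerSeriesOnBall (by exact_mod_cast hrr)
  -- rewrite the integral
  have hint : (∮ z in C(z₀, (R:ℝ)), (a:ℂ) ^ (-(μ z)) * g z)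
      = ∮ z in C(z₀, (R:ℝ)), ((1:ℂ) / (z - z₀)) ^ n • ((z - z₀)⁻¹ • f z) := by
    apply circleIntegral.integral_congr hrr.le
    intro z hz
    have hzz : z ≠ z₀ := by
      intro hzz
      rw [Metric.mem_sphere, hzz, dist_self] at hz
      exact hrr.ne hz
    have hz0 : z - z₀ ≠ 0 := sub_ne_zero.mpr hzz
    simp only [hf_def, hh_def, smul_eq_mul, hcpow]
    field_simp
    have hX : ((z - z₀)⁻¹) ^ n * (z - z₀) ^ n = 1 := by rw [inv_pow, inv_mul_cancel₀ (pow_ne_zero n hz0)]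
    linear_combination (-(g z * z - g z * z₀)) * hX
  have hcoeff : (2 * (Real.pi : ℂ) * Complex.I)⁻¹ *
      (∮ z in C(z₀, (R:ℝ)), (a:ℂ) ^ (-(μ z)) * g z)
      = cauchyPowerSeries f z₀ R n (fun _ => (1:ℂ)) := by
    rw [hint, cauchyPowerSeries_apply f z₀ R n 1, smul_eq_mul]
  rw [hcoeff]
  have hfact := hps.factorial_smul (1:ℂ) n
  have hcoeff2 : cauchyPowerSeries f z₀ R n (fun _ => (1:ℂ))
      = ((n.factorial : ℂ))⁻¹ * iteratedDeriv n f z₀ := by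
    rw [iteratedDeriv_eq_iteratedFDeriv, ← hfact, nsmul_eq_mul, ← mul_assoc,
      inv_mul_cancel₀ (by exact_mod_cast n.factorial_ne_zero), one_mul]
  rw [hcoeff2]
  have hfz : iteratedDeriv n f z₀
      = Complex.exp (-L * μ z₀) * ∑ m ∈ Finset.range (n+1), (-L) ^ m * q m z₀ :=
    hiter (-L) z₀ hz₀s
  rw [hfz, hcpow (μ z₀)]
  simp only [Finset.mul_sum]
  apply Finset.sum_congr rfl
  intro m _
  rw [neg_pow]
  ring


/-- residues of families with exponential asymptotics produce
log-terms, mechanism of Lemma 5.12.  If `F(z,a) = Σ_j a^{−μ_j(z)} g_j(z)` with `μ_j`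
holomorphic near `z₀` and `g_j` meromorphic at `z₀` (analytic on the punctured disc),
then the contour integral `(2πi)⁻¹ ∮_{|z−z₀|=r} F(z,a) dz` (the residue of `F(·,a)`
at `z₀`) has, as a function of `a`, the form
`Σ_j a^{−μ_j(z₀)} Σ_{m≤N} c_{j,m} (log a)^m`, with `N` bounded by the pole orders. -/
theorem stmt_10 {ι : Type*}
    (J : Finset ι) (μ : ι → ℂ → ℂ) (g : ι → ℂ → ℂ)
    (z₀ : ℂ) (rr : ℝ) (hrr : 0 < rr)
    (hμ : ∀ j ∈ J, ∀ z ∈ Metric.closedBall z₀ rr, AnalyticAt ℂ (μ j) z)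
    (hg : ∀ j ∈ J, MeromorphicAt (g j) z₀)
    (hg' : ∀ j ∈ J, ∀ z ∈ Metric.closedBall z₀ rr, z ≠ z₀ → AnalyticAt ℂ (g j) z) :
    ∃ (N : ℕ) (c : ι → ℕ → ℂ), ∀ a : ℝ, 1 < a →
      (2 * (Real.pi : ℂ) * Complex.I)⁻¹ *
        (∮ z in C(z₀, rr), ∑ j ∈ J, (a:ℂ) ^ (-(μ j z)) * g j z)
      = ∑ j ∈ J, (a:ℂ) ^ (-(μ j z₀)) *
          ∑ m ∈ range (N+1), c j m * ((Real.log a : ℂ)) ^ m := by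
  classical
  have key : ∀ j : ι, ∃ (N : ℕ) (c : ℕ → ℂ), j ∈ J → ∀ a : ℝ, 1 < a →
      (2 * (Real.pi : ℂ) * Complex.I)⁻¹ *
          (∮ z in C(z₀, rr), (a:ℂ) ^ (-(μ j z)) * g j z)
        = (a:ℂ) ^ (-(μ j z₀)) * ∑ m ∈ Finset.range (N+1), c m * ((Real.log a : ℂ)) ^ m := by
    intro j
    by_cases hj : j ∈ J
    · obtain ⟨N, c, hc⟩ := key_residue (μ j) (g j) z₀ rr hrr (hμ j hj) (hg j hj) (hg' j hj)
      exact ⟨N, c, fun _ => hc⟩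
    · exact ⟨0, fun _ => 0, fun hj' => absurd hj' hj⟩
  choose Nf cf hcf using key
  refine ⟨J.sup Nf, fun j m => if m < Nf j + 1 then cf j m else 0, ?_⟩
  intro a ha
  have ha0 : (0:ℝ) < a := lt_trans one_pos ha
  have haC : (a : ℂ) ≠ 0 := by exact_mod_cast ha0.ne'
  have hintg : ∀ j ∈ J, CircleIntegrable (fun z => (a:ℂ) ^ (-(μ j z)) * g j z) z₀ rr := by
    intro j hj
    apply ContinuousOn.circleIntegrable hrr.le
    intro z hz
    have hz' : z ∈ Metric.closedBall z₀ rr := Metric.sphere_subset_closedBall hz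
    have hzz : z ≠ z₀ := by
      intro hzz
      rw [Metric.mem_sphere, hzz, dist_self] at hz
      exact hrr.ne hz
    apply ContinuousAt.continuousWithinAt
    exact ((continuousAt_const_cpow haC).comp
        ((hμ j hj z hz').continuousAt.neg)).mul (hg' j hj z hz' hzz).continuousAt
  rw [circleIntegral_finset_sum' J _ z₀ rr hintg, Finset.mul_sum]
  apply Finset.sum_congr rfl
  intro j hj
  rw [hcf j hj a ha]
  congr 1
  have hsub : Finset.range (Nf j + 1) ⊆ Finset.range (J.sup Nf + 1) :=
    Finset.range_subset_range.mpr (by have := Finset.le_sup (f := Nf) hj; omega)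
  rw [← Finset.sum_subset hsub (fun m _ hm => by
    have hm' : ¬ m < Nf j + 1 := by simpa using hm
    simp [hm'])]
  apply Finset.sum_congr rfl
  intro m hm
  simp [Finset.mem_range.mp hm]
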